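/- Let T be a finitary monad on Set and F : Set^T ⥤ Set^T a finitary endofunctor preserving surjective T-algebra morphisms. Then every F-coalgebra whose carrier is a finitely presentable T-algebra is a quotient (via a surjective coalgebra morphism) of an F-coalgebra whose carrier is a free T-algebra on a finite set. -/

import Mathlib

open CategoryTheory CategoryTheory.Limits

/-- A `T`-algebra is finitely presentable if its hom-functor preserves filtered colimits. -/
def IsFP (T : Monad (Type)) (A : T.Algebra) : Prop :=
  ∀ (J : Type) (_ : SmallCategory J) (_ : IsFiltered J),
    Nonempty (PreservesColimitsOfShape J (coyoneda.obj (Opposite.op A)))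

namespace FPAux

variable {T : Monad (Type)}

/-- The algebra morphism `T.free.obj X ⟶ B` extending a function `v : X → B.A`. -/
def ext (B : T.Algebra) {X : Type} (v : X → B.A) : T.free.obj X ⟶ B where
  f := (T : Type ⥤ Type).map (↾v) ≫ B.a
  h := by
    show (T : Type ⥤ Type).map ((T : Type ⥤ Type).map (↾v) ≫ B.a) ≫ B.a
      = T.μ.app X ≫ (T : Type ⥤ Type).map (↾v) ≫ B.a
    rw [Functor.map_comp, Category.assoc, ← B.assoc]
    have := T.μ.naturality (↾v)
    simp only [Functor.comp_map] at this
    rw [← Category.assoc, this, Category.assoc]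

@[simp] lemma ext_unit (B : T.Algebra) {X : Type} (v : X → B.A) (x : X) :
    (ext B v).f (T.η.app X x) = v x := by
  have h1 : (T : Type ⥤ Type).map (↾v) (T.η.app X x) = T.η.app B.A (v x) := by
    have := ConcreteCategory.congr_hom (T.η.naturality (↾v)) x
    simp only [types_comp_apply, Functor.id_obj, Functor.id_map] at this
    exact this.symm
  show B.a ((T : Type ⥤ Type).map (↾v) (T.η.app X x)) = v x
  rw [h1]
  exact ConcreteCategory.congr_hom B.unit (v x)

/-- Two algebra morphisms out of a free algebra agree if they agree on generators. -/
lemma free_hom_ext {X : Type} {B : T.Algebra} (f g : T.free.obj X ⟶ B)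
    (hfg : ∀ x, f.f (T.η.app X x) = g.f (T.η.app X x)) : f = g := by
  have key : ∀ (k : T.free.obj X ⟶ B), k = ext B (fun x => k.f (T.η.app X x)) := by
    intro k
    apply Monad.Algebra.Hom.ext
    ext t
    show k.f t = B.a ((T : Type ⥤ Type).map (↾fun x => k.f (T.η.app X x)) t)
    have h1 : (↾fun x => k.f (T.η.app X x)) = T.η.app X ≫ k.f := rfl
    rw [h1]
    refine Eq.trans ?_ (congrArg B.a (ConcreteCategory.congr_hom
      (Functor.map_comp (T : Type ⥤ Type) (T.η.app X) k.f) t).symm)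
    have h2 : B.a ((T : Type ⥤ Type).map k.f ((T : Type ⥤ Type).map (T.η.app X) t))
        = k.f (T.μ.app X ((T : Type ⥤ Type).map (T.η.app X) t)) := by
      have := ConcreteCategory.congr_hom k.h ((T : Type ⥤ Type).map (T.η.app X) t)
      simp only [types_comp_apply, Monad.free_obj_a] at this
      exact this
    show k.f t = B.a ((T : Type ⥤ Type).map k.f ((T : Type ⥤ Type).map (T.η.app X) t))
    rw [h2]
    have h3 : T.μ.app X ((T : Type ⥤ Type).map (T.η.app X) t) = t :=
      ConcreteCategory.congr_hom (T.right_unit X) t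
    rw [h3]
  rw [key f, key g]
  congr 1
  funext x
  exact hfg x

variable (A : T.Algebra)

/-- The canonical map from the free algebra on a finite subset of `A`. -/
def hmap (S : Finset A.A) : T.free.obj {x // x ∈ S} ⟶ A :=
  ext A (fun x => (x : A.A))

/-- The image of `hmap S`. -/
def R (S : Finset A.A) : Set A.A := Set.range (hmap A S).f

lemma mem_R_of_mem {S : Finset A.A} {a : A.A} (ha : a ∈ S) : a ∈ R A S :=
  ⟨T.η.app _ ⟨a, ha⟩, ext_unit A _ _⟩

lemma R_closed (S : Finset A.A) (t : (T : Type ⥤ Type).obj (R A S)) :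
    A.a ((T : Type ⥤ Type).map (↾(Subtype.val : R A S → A.A)) t) ∈ R A S := by
  classical
  let g : R A S → (T : Type ⥤ Type).obj {x // x ∈ S} := fun y => y.2.choose
  have hg : ∀ y : R A S, (hmap A S).f (g y) = y.1 := fun y => y.2.choose_spec
  have h1 : (↾(Subtype.val : R A S → A.A)) = (↾fun y => (hmap A S).f (g y)) := by
    ext y; exact (hg y).symm
  have h2 : (↾fun y : R A S => (hmap A S).f (g y)) = ↾g ≫ (hmap A S).f := rfl
  refine ⟨T.μ.app _ ((T : Type ⥤ Type).map (↾g) t), ?_⟩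
  have h3 := ConcreteCategory.congr_hom (hmap A S).h ((T : Type ⥤ Type).map (↾g) t)
  simp only [types_comp_apply, Monad.free_obj_a] at h3
  -- h3 : A.a (T.map (hmap).f (T.map g t)) = (hmap).f (μ (T.map g t))
  rw [h1, h2]
  refine Eq.trans ?_ (congrArg A.a (ConcreteCategory.congr_hom
    (Functor.map_comp (T : Type ⥤ Type) (↾g) (hmap A S).f) t).symm)
  exact h3.symm

/-- The subalgebra of `A` generated by the finite subset `S`. -/
def DObj (S : Finset A.A) : T.Algebra where
  A := R A S
  a := ↾fun t => ⟨A.a ((T : Type ⥤ Type).map (↾(Subtype.val : R A S → A.A)) t),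
    R_closed A S t⟩
  unit := by
    ext y
    show A.a ((T : Type ⥤ Type).map (↾Subtype.val) (T.η.app _ y)) = y.1
    have h1 : (T : Type ⥤ Type).map (↾(Subtype.val : R A S → A.A)) (T.η.app _ y)
        = T.η.app A.A y.1 := by
      have := ConcreteCategory.congr_hom (T.η.naturality (↾(Subtype.val : R A S → A.A))) y
      simp only [types_comp_apply, Functor.id_obj, Functor.id_map] at this
      exact this.symm
    rw [h1]
    exact ConcreteCategory.congr_hom A.unit y.1
  assoc := by
    ext t
    show A.a ((T : Type ⥤ Type).map (↾Subtype.val) (T.μ.app _ t))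
      = A.a ((T : Type ⥤ Type).map (↾Subtype.val)
          ((T : Type ⥤ Type).map (↾fun u => (⟨A.a ((T : Type ⥤ Type).map (↾Subtype.val) u),
            R_closed A S u⟩ : R A S)) t))
    have h1 : (T : Type ⥤ Type).map (↾(Subtype.val : R A S → A.A)) (T.μ.app _ t)
        = T.μ.app A.A ((T : Type ⥤ Type).map ((T : Type ⥤ Type).map (↾Subtype.val)) t) := by
      have := ConcreteCategory.congr_hom (T.μ.naturality (↾(Subtype.val : R A S → A.A))) t
      simp only [types_comp_apply, Functor.comp_obj, Functor.comp_map] at this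
      exact this.symm
    rw [h1]
    have h2 := ConcreteCategory.congr_hom A.assoc
      ((T : Type ⥤ Type).map ((T : Type ⥤ Type).map (↾(Subtype.val : R A S → A.A))) t)
    simp only [types_comp_apply] at h2
    rw [h2]
    exact (congrArg A.a (ConcreteCategory.congr_hom ((T : Type ⥤ Type).map_comp
      ((T : Type ⥤ Type).map (↾Subtype.val)) A.a) t)).symm.trans (congrArg A.a
      (ConcreteCategory.congr_hom ((T : Type ⥤ Type).map_comp (↾fun u =>
        (⟨A.a ((T : Type ⥤ Type).map (↾Subtype.val) u), R_closed A S u⟩ : R A S))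
        (↾Subtype.val)) t))

lemma R_mono {S S' : Finset A.A} (h : S ≤ S') : R A S ⊆ R A S' := by
  rintro a ⟨u, rfl⟩
  refine ⟨(T : Type ⥤ Type).map (↾fun x : {x // x ∈ S} => (⟨x.1, h x.2⟩ : {x // x ∈ S'})) u, ?_⟩
  show A.a ((T : Type ⥤ Type).map (↾Subtype.val) _) = A.a ((T : Type ⥤ Type).map (↾Subtype.val) u)
  exact congrArg A.a (ConcreteCategory.congr_hom ((T : Type ⥤ Type).map_comp
    (↾fun x : {x // x ∈ S} => (⟨x.1, h x.2⟩ : {x // x ∈ S'})) (↾Subtype.val)) u).symm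

/-- The filtered diagram of subalgebras of `A` generated by finite subsets. -/
def D : Finset A.A ⥤ T.Algebra where
  obj S := DObj A S
  map {S S'} f :=
    { f := ↾fun (y : R A S) => (⟨y.1, R_mono A (leOfHom f) y.2⟩ : R A S')
      h := by
        ext t
        apply Subtype.ext
        show A.a ((T : Type ⥤ Type).map (↾Subtype.val)
            ((T : Type ⥤ Type).map (↾fun y : R A S => (⟨y.1, R_mono A (leOfHom f) y.2⟩ : R A S')) t))
          = A.a ((T : Type ⥤ Type).map (↾Subtype.val) t)
        exact congrArg A.a (ConcreteCategory.congr_hom ((T : Type ⥤ Type).map_comp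
          (↾fun y : R A S => (⟨y.1, R_mono A (leOfHom f) y.2⟩ : R A S')) (↾Subtype.val)) t).symm }
  map_id S := by
    apply Monad.Algebra.Hom.ext
    ext y
    rfl
  map_comp f g := by
    apply Monad.Algebra.Hom.ext
    ext y
    rfl

/-- The cocone on `D A` with apex `A`. -/
def cc : Cocone (D A) where
  pt := A
  ι :=
    { app := fun S =>
        { f := ↾Subtype.val
          h := rfl }
      naturality := fun S S' f => by
        apply Monad.Algebra.Hom.ext
        ext y
        rfl }

/-- The underlying cocone in `Type` is a colimit (a directed union of subsets covering `A`). -/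
def isColimTy : IsColimit ((Monad.forget T).mapCocone (cc A)) where
  desc c := ↾fun a => c.ι.app {a} (⟨a, mem_R_of_mem A (Finset.mem_singleton_self a)⟩ : R A {a})
  fac c S := by
    classical
    ext y
    have h1 : ({y.1} : Finset A.A) ≤ insert y.1 S := by
      intro z hz
      rw [Finset.mem_singleton] at hz
      exact hz ▸ Finset.mem_insert_self _ _
    have h2 : S ≤ insert y.1 S := fun z hz => Finset.mem_insert_of_mem hz
    have w1 := ConcreteCategory.congr_hom (c.w (homOfLE h1)) (⟨y.1, mem_R_of_mem A (Finset.mem_singleton_self _)⟩ : R A {y.1})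
    have w2 := ConcreteCategory.congr_hom (c.w (homOfLE h2)) y
    show c.ι.app {y.1} (⟨y.1, _⟩ : R A {y.1}) = c.ι.app S y
    rw [← w1, ← w2]
    rfl
  uniq c m hm := by
    ext a
    have := ConcreteCategory.congr_hom (hm {a}) (⟨a, mem_R_of_mem A (Finset.mem_singleton_self a)⟩ : R A {a})
    exact this

end FPAux

open FPAux in
/-- For a finitary monad `T` on `Set` and a finitary endofunctor `F` on `Set^T`
preserving surjective algebra morphisms, every `F`-coalgebra with finitely presentable
carrier is a surjective quotient of an `F`-coalgebra carried by a free algebra on a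
finite set. -/
theorem fp_coalgebra_quotient_of_free
    (T : Monad (Type)) [PreservesFilteredColimits (T : Type ⥤ Type)]
    (F : T.Algebra ⥤ T.Algebra) [PreservesFilteredColimits F]
    (hsurj : ∀ {A B : T.Algebra} (f : A ⟶ B), Function.Surjective f.f →
      Function.Surjective (F.map f).f)
    (C : Endofunctor.Coalgebra F) (hC : IsFP T C.V) :
    ∃ (X : Type) (_ : Finite X) (c : T.free.obj X ⟶ F.obj (T.free.obj X))
      (q : (⟨T.free.obj X, c⟩ : Endofunctor.Coalgebra F) ⟶ C),
      Function.Surjective q.f.f := by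
  classical
  set A := C.V with hA
  -- The cocone `cc A` is a colimit in the category of algebras.
  have hColim : IsColimit (cc A) :=
    isColimitOfReflects (Monad.forget T) (isColimTy A)
  -- Use finite presentability to factor the identity through a stage.
  obtain ⟨P⟩ := hC (Finset A.A) inferInstance inferInstance
  have hmapped : IsColimit ((coyoneda.obj (Opposite.op A)).mapCocone (cc A)) :=
    isColimitOfPreserves _ hColim
  obtain ⟨S, r, hr⟩ := Types.jointly_surjective _ hmapped (show ((coyoneda.obj (Opposite.op A)).mapCocone (cc A)).pt from 𝟙 A)
  -- `hr : r ≫ (cc A).ι.app S = 𝟙 A`, so `hmap A S` is surjective.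
  have hsurjS : Function.Surjective (hmap A S).f := by
    intro a
    have h1 : @Eq A.A (((cc A).ι.app S).f (r.f a)) a := by
      have := congrArg (fun (k : A ⟶ A) => k.f a) hr
      exact this
    exact ⟨(show R A S from r.f a).2.choose, by rw [(show R A S from r.f a).2.choose_spec]; exact h1⟩
  set q0 : T.free.obj {x // x ∈ S} ⟶ C.V := hmap A S with hq0def
  have hFq : Function.Surjective (F.map q0).f := hsurj q0 hsurjS
  -- Lift the coalgebra structure along the surjection.
  choose g hg using fun x : {x // x ∈ S} =>
    hFq ((q0 ≫ C.str).f (T.η.app {x // x ∈ S} x))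
  refine ⟨{x // x ∈ S}, inferInstance, ext (F.obj (T.free.obj {x // x ∈ S})) g, ?_, ?_⟩
  · refine ⟨q0, ?_⟩
    apply free_hom_ext
    intro x
    show (F.map q0).f ((ext (F.obj (T.free.obj {x // x ∈ S})) g).f (T.η.app _ x))
      = (q0 ≫ C.str).f (T.η.app _ x)
    rw [ext_unit]
    exact hg x
  · exact hsurjS
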